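/- Let w be a minimum length word-representant of a connected word-representable graph G. Then O_max(w) − O_min(w) ≤ diam(G), where O_max(w) and O_min(w) are the maximum and minimum numbers of occurrences of a letter in w, and diam(G) is the diameter of G. -/

import Mathlib

open SimpleGraph

variable {V : Type*}

/-- Two distinct letters `x` and `y` alternate in a word `w` if the subsequence of `w`
consisting of all occurrences of `x` and `y` is strictly alternating. -/
def Alternates [DecidableEq V] (x y : V) (w : List V) : Prop :=
  (w.filter (fun z => decide (z = x ∨ z = y))).Chain' (· ≠ ·)

/-- A word `w` represents the graph `G` if it contains every vertex at least once and
two distinct vertices are adjacent iff they alternate in `w`. -/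
def Represents [DecidableEq V] (G : SimpleGraph V) (w : List V) : Prop :=
  (∀ v : V, v ∈ w) ∧ ∀ x y : V, x ≠ y → (G.Adj x y ↔ Alternates x y w)

/-- A graph is word-representable if some word represents it. -/
def WordRepresentable [DecidableEq V] (G : SimpleGraph V) : Prop :=
  ∃ w : List V, Represents G w

/-- `l(G)`: the minimum length of a word-representant of `G`. -/
noncomputable def reprLen [DecidableEq V] (G : SimpleGraph V) : ℕ :=
  sInf {n | ∃ w : List V, Represents G w ∧ w.length = n}

/-- In an alternating word over two letters, the counts differ by at most one. -/
theorem alt_count [DecidableEq V] {x y : V} (hxy : x ≠ y) :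
    ∀ l : List V, l.Chain' (· ≠ ·) → (∀ z ∈ l, z = x ∨ z = y) →
      l.count x ≤ l.count y + 1
  | [] => by simp
  | [a] => by
      intro _ hm
      rcases hm a (by simp) with rfl | rfl <;> simp [List.count_singleton, hxy, hxy.symm]
  | a :: b :: t => by
      intro hc hm
      have hab : a ≠ b := (List.isChain_cons_cons.mp hc).1
      have ht : t.Chain' (· ≠ ·) := ((List.isChain_cons_cons.mp hc).2).tail
      have hmt : ∀ z ∈ t, z = x ∨ z = y := fun z hz => hm z (by simp [hz])
      have ih := alt_count hxy t ht hmt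
      rcases hm a (by simp) with rfl | rfl <;> rcases hm b (by simp) with rfl | rfl
      · exact absurd rfl hab
      · simp only [List.count_cons]
        simp [hxy, hxy.symm]; omega
      · simp only [List.count_cons]
        simp [hxy, hxy.symm]; omega
      · exact absurd rfl hab

theorem adj_count [DecidableEq V] {G : SimpleGraph V} {w : List V}
    (hrep : Represents G w) {x y : V} (h : G.Adj x y) :
    w.count x ≤ w.count y + 1 := by
  have halt : Alternates x y w := (hrep.2 x y h.ne).mp h
  have hmem : ∀ z ∈ w.filter (fun z => decide (z = x ∨ z = y)), z = x ∨ z = y := by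
    intro z hz
    have := List.of_mem_filter hz
    simpa using this
  have hx : (w.filter (fun z => decide (z = x ∨ z = y))).count x = w.count x := by
    rw [List.count_filter]
    simp [List.count]
  have hy : (w.filter (fun z => decide (z = x ∨ z = y))).count y = w.count y := by
    rw [List.count_filter]
    simp [List.count]
  have := alt_count h.ne _ halt hmem
  omega

theorem walk_count [DecidableEq V] {G : SimpleGraph V} {w : List V}
    (hrep : Represents G w) : ∀ {u v : V} (p : G.Walk u v),
    w.count u ≤ w.count v + p.length := by
  intro u v p
  induction p with
  | nil => simp
  | cons h p ih =>
      have := adj_count hrep h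
      simp only [SimpleGraph.Walk.length_cons]
      omega

theorem stmt9 [Fintype V] [Nonempty V] [DecidableEq V] (G : SimpleGraph V)
    (hconn : G.Connected)
    (w : List V) (hrep : Represents G w)
    (hmin : ∀ w' : List V, Represents G w' → w.length ≤ w'.length) :
    Finset.univ.sup' Finset.univ_nonempty (fun v : V => w.count v) -
      Finset.univ.inf' Finset.univ_nonempty (fun v : V => w.count v) ≤ G.diam := by
  obtain ⟨a, -, ha⟩ := Finset.exists_mem_eq_sup' Finset.univ_nonempty
    (fun v : V => w.count v)
  obtain ⟨b, -, hb⟩ := Finset.exists_mem_eq_inf' Finset.univ_nonempty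
    (fun v : V => w.count v)
  rw [ha, hb]
  obtain ⟨p, hp⟩ := hconn.exists_walk_length_eq_dist a b
  have h1 : w.count a ≤ w.count b + G.dist a b := hp ▸ walk_count hrep p
  have hne : G.ediam ≠ ⊤ := by
    obtain ⟨u, v, huv⟩ := G.exists_edist_eq_ediam_of_finite
    rw [← huv, SimpleGraph.edist_ne_top_iff_reachable]
    exact hconn u v
  have h2 : G.dist a b ≤ G.diam := SimpleGraph.dist_le_diam hne
  omega
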